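/- (Våge's inequality for the Kondratiev space of stochastic distributions) Let p, q ∈ ℕ with p ≥ q + 2. Then S := ∑_{α ∈ ℕ →₀ ℕ} (2ℕ)^{−(p−q)α} < ∞, and for all f, g : (ℕ →₀ ℕ) → ℂ with ∑_α |f_α|² (2ℕ)^{−qα} < ∞ and ∑_β |g_β|² (2ℕ)^{−pβ} < ∞, the Wick product f ⋄ g satisfies ∑_γ |∑_{α+β=γ} f_α g_β|² (2ℕ)^{−pγ} ≤ S · (∑_α |f_α|² (2ℕ)^{−qα}) · (∑_β |g_β|² (2ℕ)^{−pβ}). -/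

import Mathlib

open scoped ENNReal

/-- The weight `(2ℕ)^α = ∏_{k ∈ supp α} (2(k+1))^(α k)` on the free commutative
monoid `ℕ →₀ ℕ`. -/
noncomputable def twoNpow (α : ℕ →₀ ℕ) : ℝ :=
  ∏ k ∈ α.support, ((2 * ((k : ℝ) + 1)) ^ (α k))

/-- The convolution (Wick product) of two families indexed by `ℕ →₀ ℕ`. -/
noncomputable def wick (f g : (ℕ →₀ ℕ) → ℂ) : (ℕ →₀ ℕ) → ℂ :=
  fun γ => ∑ x ∈ Finset.HasAntidiagonal.antidiagonal γ, f x.1 * g x.2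


lemma twoNpow_eq_prod (α : ℕ →₀ ℕ) :
    twoNpow α = α.prod fun k n => (2 * ((k : ℝ) + 1)) ^ n := rfl

lemma one_le_twoNpow (α : ℕ →₀ ℕ) : 1 ≤ twoNpow α := by
  rw [twoNpow]
  have : (1:ℝ) = ∏ _k ∈ α.support, (1:ℝ) := by simp
  rw [this]
  apply Finset.prod_le_prod (by intro i _; norm_num)
  intro k _
  apply one_le_pow₀
  have : (0:ℝ) ≤ (k:ℝ) := Nat.cast_nonneg k
  nlinarith

lemma twoNpow_pos (α : ℕ →₀ ℕ) : 0 < twoNpow α :=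
  lt_of_lt_of_le one_pos (one_le_twoNpow α)

lemma twoNpow_add (α β : ℕ →₀ ℕ) : twoNpow (α + β) = twoNpow α * twoNpow β := by
  simp only [twoNpow_eq_prod]
  exact Finsupp.prod_add_index' (fun a => pow_zero _) (fun a b₁ b₂ => pow_add _ _ _)

lemma twoNpow_eq_prod_range (α : ℕ →₀ ℕ) (N : ℕ) (hN : α.support ⊆ Finset.range N) :
    twoNpow α = ∏ k ∈ Finset.range N, (2 * ((k : ℝ) + 1)) ^ (α k) := by
  rw [twoNpow]
  exact (Finset.prod_subset (f := fun k : ℕ => (2 * ((k : ℝ) + 1)) ^ (α k)) hN (fun x _ hx => by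
    simp [Finsupp.notMem_support_iff.mp hx]))

lemma tsum_pi_pow : ∀ (N : ℕ) (c : ℕ → ℝ≥0∞),
    ∑' v : Fin N → ℕ, ∏ i : Fin N, c (i : ℕ) ^ (v i)
      = ∏ k ∈ Finset.range N, (1 - c k)⁻¹ := by
  intro N
  induction N with
  | zero =>
    intro c
    simp only [Finset.univ_eq_empty, Finset.prod_empty, Finset.range_zero]
    rw [tsum_eq_single (fun i => i.elim0) (fun b hb => absurd (Subsingleton.elim b _) hb)]
  | succ N ih =>
    intro c
    rw [← (Fin.consEquiv (fun _ : Fin (N+1) => ℕ)).tsum_eq fun v => ∏ i : Fin (N+1), c (i:ℕ) ^ v i]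
    rw [ENNReal.tsum_prod']
    have key : ∀ (n : ℕ) (w : Fin N → ℕ),
        (∏ i : Fin (N+1), c (i:ℕ) ^ ((Fin.consEquiv (fun _ : Fin (N+1) => ℕ)) (n, w)) i)
          = c 0 ^ n * ∏ i : Fin N, c ((i:ℕ)+1) ^ w i := by
      intro n w
      rw [Fin.prod_univ_succ]
      simp [Fin.consEquiv]
    simp only [key, ENNReal.tsum_mul_left]
    rw [ih (fun k => c (k+1)), ENNReal.tsum_mul_right, ENNReal.tsum_geometric,
      Finset.prod_range_succ' (fun k => (1 - c k)⁻¹) N]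
    ring

lemma sum_inv_sq_le (N : ℕ) : ∑ k ∈ Finset.range N, (1:ℝ)/((k:ℝ)+1)^2 ≤ 2 := by
  set g : ℕ → ℝ := fun k => 1/((k:ℝ)+1) with hg
  have h1 : ∀ k ∈ Finset.range N, (1:ℝ)/((k:ℝ)+1)^2 ≤ 2 * (g k - g (k+1)) := by
    intro k _
    have hk : (0:ℝ) < (k:ℝ)+1 := by positivity
    have hk2 : (0:ℝ) < (k:ℝ)+2 := by positivity
    have key : g k - g (k+1) = 1/(((k:ℝ)+1)*((k:ℝ)+2)) := by
      rw [hg]; simp only; push_cast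
      rw [div_sub_div _ _ (ne_of_gt hk) (by positivity : ((k:ℝ)+1+1) ≠ 0)]
      ring_nf
    rw [key, mul_one_div, div_le_div_iff₀ (by positivity) (by positivity)]
    nlinarith
  calc ∑ k ∈ Finset.range N, (1:ℝ)/((k:ℝ)+1)^2
      ≤ ∑ k ∈ Finset.range N, 2 * (g k - g (k+1)) := Finset.sum_le_sum h1
    _ = 2 * ∑ k ∈ Finset.range N, (g k - g (k+1)) := by rw [Finset.mul_sum]
    _ = 2 * (g 0 - g N) := by rw [Finset.sum_range_sub' g]
    _ ≤ 2 := by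
        have hgN : (0:ℝ) ≤ g N := by rw [hg]; positivity
        have hg0 : g 0 = 1 := by rw [hg]; norm_num
        linarith

lemma prod_one_sub_inv_le (N r : ℕ) (hr : 2 ≤ r) :
    ∏ k ∈ Finset.range N, (1 - (((2 * ((k:ℝ)+1))^r)⁻¹ : ℝ))⁻¹ ≤ 3 := by
  set x : ℕ → ℝ := fun k => ((2 * ((k:ℝ)+1))^r)⁻¹ with hx
  have hb : ∀ k : ℕ, (0:ℝ) < x k ∧ x k ≤ 1/(4*((k:ℝ)+1)^2) := by
    intro k
    have h1 : (1:ℝ) ≤ 2 * ((k:ℝ)+1) := by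
      have : (0:ℝ) ≤ (k:ℝ) := Nat.cast_nonneg k
      nlinarith
    refine ⟨by positivity, ?_⟩
    have h2 : (2 * ((k:ℝ)+1))^2 ≤ (2 * ((k:ℝ)+1))^r := pow_le_pow_right₀ h1 hr
    have h3 : x k ≤ ((2 * ((k:ℝ)+1))^2)⁻¹ := by
      rw [hx]; simp only; gcongr
    calc x k ≤ ((2 * ((k:ℝ)+1))^2)⁻¹ := h3
      _ = 1/(4*((k:ℝ)+1)^2) := by rw [one_div]; congr 1; ring
  have hxhalf : ∀ k : ℕ, x k ≤ 1/2 := by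
    intro k
    refine le_trans (hb k).2 ?_
    have hk1 : (1:ℝ) ≤ ((k:ℝ)+1)^2 := by
      have : (0:ℝ) ≤ (k:ℝ) := Nat.cast_nonneg k
      nlinarith
    rw [div_le_div_iff₀ (by positivity) (by norm_num)]
    linarith
  have hfac : ∀ k : ℕ, (1 - x k)⁻¹ ≤ Real.exp (2 * x k) := by
    intro k
    have h0 : (0:ℝ) < 1 - x k := by linarith [hxhalf k]
    have step1 : (1 - x k)⁻¹ ≤ 1 + 2 * x k := by
      rw [inv_eq_one_div, div_le_iff₀ h0]
      nlinarith [(hb k).1, hxhalf k]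
    have step2 : 1 + 2 * x k ≤ Real.exp (2 * x k) := by
      linarith [Real.add_one_le_exp (2 * x k)]
    linarith
  calc ∏ k ∈ Finset.range N, (1 - x k)⁻¹
      ≤ ∏ k ∈ Finset.range N, Real.exp (2 * x k) := by
        refine Finset.prod_le_prod (fun k _ => ?_) (fun k _ => hfac k)
        have h0 : (0:ℝ) < 1 - x k := by linarith [hxhalf k]
        positivity
    _ = Real.exp (∑ k ∈ Finset.range N, 2 * x k) := (Real.exp_sum _ _).symm
    _ ≤ Real.exp 1 := by
        apply Real.exp_le_exp.mpr
        have : ∑ k ∈ Finset.range N, 2 * x k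
            ≤ ∑ k ∈ Finset.range N, (1/2) * (1/((k:ℝ)+1)^2) := by
          refine Finset.sum_le_sum (fun k _ => ?_)
          have h4 := (hb k).2
          have h5 : 2 * (1/(4*((k:ℝ)+1)^2)) = (1/2) * (1/((k:ℝ)+1)^2) := by
            field_simp; ring
          linarith
        have h2 := sum_inv_sq_le N
        calc ∑ k ∈ Finset.range N, 2 * x k
            ≤ ∑ k ∈ Finset.range N, (1/2) * (1/((k:ℝ)+1)^2) := this
          _ = (1/2) * ∑ k ∈ Finset.range N, (1/((k:ℝ)+1)^2) := by rw [Finset.mul_sum]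
          _ ≤ (1/2) * 2 := by linarith
          _ = 1 := by norm_num
    _ ≤ 3 := by
        have := Real.exp_one_lt_d9
        linarith

lemma ofReal_inv_twoNpow_eq (r : ℕ) (α : ℕ →₀ ℕ) (N : ℕ) (hN : α.support ⊆ Finset.range N) :
    ENNReal.ofReal (1 / twoNpow α ^ r)
      = ∏ k ∈ Finset.range N, (ENNReal.ofReal (((2 * ((k:ℝ)+1))^r)⁻¹)) ^ (α k) := by
  have hreal : 1 / twoNpow α ^ r
      = ∏ k ∈ Finset.range N, ((((2 * ((k:ℝ)+1))^r)⁻¹) ^ (α k)) := by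
    rw [twoNpow_eq_prod_range α N hN, one_div, ← Finset.prod_pow, ← Finset.prod_inv_distrib]
    refine Finset.prod_congr rfl fun k _ => ?_
    rw [← pow_mul, mul_comm (α k) r, pow_mul, inv_pow]
  rw [hreal, ENNReal.ofReal_prod_of_nonneg (fun k _ => by positivity)]
  refine Finset.prod_congr rfl fun k _ => ?_
  rw [ENNReal.ofReal_pow (by positivity)]

lemma tsum_inv_twoNpow_le (r : ℕ) (hr : 2 ≤ r) :
    ∑' α : ℕ →₀ ℕ, ENNReal.ofReal (1 / twoNpow α ^ r) ≤ 3 := by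
  rw [ENNReal.tsum_eq_iSup_sum]
  refine iSup_le fun s => ?_
  set N := (s.sup fun α => α.support.sup id) + 1 with hNdef
  have hsupp : ∀ α ∈ s, α.support ⊆ Finset.range N := by
    intro α hα k hk
    rw [Finset.mem_range, hNdef]
    have h1 : k ≤ α.support.sup id := Finset.le_sup (f := id) hk
    have h2 : α.support.sup id ≤ s.sup (fun α => α.support.sup id) :=
      Finset.le_sup (f := fun α => α.support.sup id) hα
    omega
  set y : ℕ → ℝ≥0∞ := fun k => ENNReal.ofReal (((2 * ((k:ℝ)+1))^r)⁻¹) with hy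
  have hxfacts : ∀ k : ℕ, 0 < (((2 * ((k:ℝ)+1))^r)⁻¹ : ℝ)
      ∧ (((2 * ((k:ℝ)+1))^r)⁻¹ : ℝ) ≤ 1/2 := by
    intro k
    have h1 : (2:ℝ) ≤ 2 * ((k:ℝ)+1) := by
      have : (0:ℝ) ≤ (k:ℝ) := Nat.cast_nonneg k
      nlinarith
    have h2 : (2:ℝ) ≤ (2 * ((k:ℝ)+1))^r :=
      le_trans h1 (le_self_pow₀ (by linarith) (by omega))
    constructor
    · positivity
    · rw [inv_le_comm₀ (by linarith) (by norm_num)]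
      norm_num
      linarith
  calc ∑ α ∈ s, ENNReal.ofReal (1 / twoNpow α ^ r)
      = ∑ α ∈ s, ∏ i : Fin N, y (i:ℕ) ^ (α (i:ℕ)) := by
        refine Finset.sum_congr rfl fun α hα => ?_
        rw [ofReal_inv_twoNpow_eq r α N (hsupp α hα),
          ← Fin.prod_univ_eq_prod_range (fun k => y k ^ (α k)) N]
    _ = ∑ v ∈ s.image (fun (α : ℕ →₀ ℕ) (i : Fin N) => α (i:ℕ)),
          ∏ i : Fin N, y (i:ℕ) ^ (v i) := by
        rw [Finset.sum_image]
        intro α hα β hβ h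
        ext k
        by_cases hk : k < N
        · exact congrFun h ⟨k, hk⟩
        · have h1 : α k = 0 := by
            by_contra h0
            exact hk (Finset.mem_range.mp (hsupp α hα (Finsupp.mem_support_iff.mpr h0)))
          have h2 : β k = 0 := by
            by_contra h0
            exact hk (Finset.mem_range.mp (hsupp β hβ (Finsupp.mem_support_iff.mpr h0)))
          rw [h1, h2]
    _ ≤ ∑' v : Fin N → ℕ, ∏ i : Fin N, y (i:ℕ) ^ (v i) := ENNReal.sum_le_tsum _
    _ = ∏ k ∈ Finset.range N, (1 - y k)⁻¹ := tsum_pi_pow N y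
    _ ≤ 3 := by
        have conv : ∀ k : ℕ, (1 - y k)⁻¹
            = ENNReal.ofReal ((1 - (((2 * ((k:ℝ)+1))^r)⁻¹ : ℝ))⁻¹) := by
          intro k
          obtain ⟨hpos, hhalf⟩ := hxfacts k
          rw [ENNReal.ofReal_inv_of_pos (by linarith), ENNReal.ofReal_sub _ hpos.le,
            ENNReal.ofReal_one, hy]
        simp only [conv]
        rw [← ENNReal.ofReal_prod_of_nonneg (fun k _ => by
          have := hxfacts k
          have : (0:ℝ) < 1 - (((2 * ((k:ℝ)+1))^r)⁻¹ : ℝ) := by linarith [this.2]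
          positivity)]
        calc ENNReal.ofReal _ ≤ ENNReal.ofReal 3 :=
              ENNReal.ofReal_le_ofReal (prod_one_sub_inv_le N r hr)
          _ = 3 := by norm_num

/-- Equivalence between pairs and the sigma type of antidiagonals. -/
noncomputable def antidiagSigmaEquiv :
    ((ℕ →₀ ℕ) × (ℕ →₀ ℕ)) ≃ (Σ γ : ℕ →₀ ℕ, ↥(Finset.HasAntidiagonal.antidiagonal γ)) where
  toFun x := ⟨x.1 + x.2, ⟨x, by simp [Finset.HasAntidiagonal.mem_antidiagonal]⟩⟩
  invFun σ := σ.2.1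
  left_inv x := rfl
  right_inv σ := by
    rcases σ with ⟨γ, ⟨x, hx⟩⟩
    have h : x.1 + x.2 = γ := Finset.HasAntidiagonal.mem_antidiagonal.mp hx
    subst h
    rfl

lemma tsum_antidiagonal_mul (u w : (ℕ →₀ ℕ) → ℝ≥0∞) :
    ∑' γ : ℕ →₀ ℕ, ∑ x ∈ Finset.HasAntidiagonal.antidiagonal γ, u x.1 * w x.2
      = (∑' α : ℕ →₀ ℕ, u α) * (∑' β : ℕ →₀ ℕ, w β) := by
  have h1 : ∀ γ : ℕ →₀ ℕ, ∑ x ∈ Finset.HasAntidiagonal.antidiagonal γ, u x.1 * w x.2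
      = ∑' x : ↥(Finset.HasAntidiagonal.antidiagonal γ), u x.val.1 * w x.val.2 :=
    fun γ => (Finset.tsum_subtype _ _).symm
  simp only [h1]
  rw [← ENNReal.tsum_sigma' (fun σ : Σ γ : ℕ →₀ ℕ, ↥(Finset.HasAntidiagonal.antidiagonal γ) =>
    u σ.2.val.1 * w σ.2.val.2)]
  rw [← antidiagSigmaEquiv.tsum_eq (fun σ : Σ γ : ℕ →₀ ℕ, ↥(Finset.HasAntidiagonal.antidiagonal γ) =>
    u σ.2.val.1 * w σ.2.val.2)]
  rw [show (fun x : (ℕ →₀ ℕ) × (ℕ →₀ ℕ) =>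
      u (antidiagSigmaEquiv x).2.val.1 * w (antidiagSigmaEquiv x).2.val.2)
    = fun x : (ℕ →₀ ℕ) × (ℕ →₀ ℕ) => u x.1 * w x.2 from rfl]
  rw [ENNReal.tsum_prod']
  simp only [ENNReal.tsum_mul_left, ENNReal.tsum_mul_right]

lemma wick_sq_le (p q : ℕ) (hqp : q ≤ p) (f g : (ℕ →₀ ℕ) → ℂ) (γ : ℕ →₀ ℕ) :
    ‖wick f g γ‖^2 / twoNpow γ ^ p
      ≤ (∑ x ∈ Finset.HasAntidiagonal.antidiagonal γ, 1 / twoNpow x.1 ^ (p-q))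
        * (∑ x ∈ Finset.HasAntidiagonal.antidiagonal γ,
            (‖f x.1‖^2 / twoNpow x.1 ^ q) * (‖g x.2‖^2 / twoNpow x.2 ^ p)) := by
  have hr : (p - q) + q = p := Nat.sub_add_cancel hqp
  have h1 : ‖wick f g γ‖ ≤ ∑ x ∈ Finset.HasAntidiagonal.antidiagonal γ, ‖f x.1‖ * ‖g x.2‖ := by
    refine (norm_sum_le _ _).trans_eq ?_
    exact Finset.sum_congr rfl fun x _ => norm_mul _ _
  have h2 : ‖wick f g γ‖^2 ≤ (∑ x ∈ Finset.HasAntidiagonal.antidiagonal γ, ‖f x.1‖ * ‖g x.2‖)^2 :=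
    pow_le_pow_left₀ (norm_nonneg _) h1 2
  have hCS : (∑ x ∈ Finset.HasAntidiagonal.antidiagonal γ, ‖f x.1‖ * ‖g x.2‖)^2
      ≤ (∑ x ∈ Finset.HasAntidiagonal.antidiagonal γ, 1 / twoNpow x.1 ^ (p-q))
        * (∑ x ∈ Finset.HasAntidiagonal.antidiagonal γ,
            ‖f x.1‖^2 * ‖g x.2‖^2 * twoNpow x.1 ^ (p-q)) := by
    refine Finset.sum_sq_le_sum_mul_sum_of_sq_eq_mul _
      (fun x _ => by have := twoNpow_pos x.1; positivity)
      (fun x _ => by have := twoNpow_pos x.1; positivity) (fun x _ => ?_)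
    have h := twoNpow_pos x.1
    field_simp
  have hdiv : (∑ x ∈ Finset.HasAntidiagonal.antidiagonal γ,
      ‖f x.1‖^2 * ‖g x.2‖^2 * twoNpow x.1 ^ (p-q)) / twoNpow γ ^ p
      = ∑ x ∈ Finset.HasAntidiagonal.antidiagonal γ,
          (‖f x.1‖^2 / twoNpow x.1 ^ q) * (‖g x.2‖^2 / twoNpow x.2 ^ p) := by
    rw [Finset.sum_div]
    refine Finset.sum_congr rfl fun x hx => ?_
    have hγ : x.1 + x.2 = γ := Finset.HasAntidiagonal.mem_antidiagonal.mp hx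
    have hT : twoNpow γ = twoNpow x.1 * twoNpow x.2 := by rw [← hγ, twoNpow_add]
    have hp1 : twoNpow x.1 ^ p = twoNpow x.1 ^ (p-q) * twoNpow x.1 ^ q := by
      rw [← pow_add, hr]
    have h01 := twoNpow_pos x.1
    have h02 := twoNpow_pos x.2
    rw [hT, mul_pow, hp1]
    field_simp
  calc ‖wick f g γ‖^2 / twoNpow γ ^ p
      ≤ ((∑ x ∈ Finset.HasAntidiagonal.antidiagonal γ, 1 / twoNpow x.1 ^ (p-q))
          * (∑ x ∈ Finset.HasAntidiagonal.antidiagonal γ,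
              ‖f x.1‖^2 * ‖g x.2‖^2 * twoNpow x.1 ^ (p-q))) / twoNpow γ ^ p := by
        have h0 := twoNpow_pos γ
        gcongr
        exact h2.trans hCS
    _ = _ := by rw [mul_div_assoc, hdiv]

/-- (Våge's inequality for the Kondratiev space of stochastic distributions.)
For `p ≥ q + 2`, `S = ∑_α (2ℕ)^{-(p-q)α} < ∞`, and the Wick product satisfies
`‖f ⋄ g‖_p² ≤ S ⬝ ‖f‖_q² ⬝ ‖g‖_p²`. -/
theorem kondratiev_vage_inequality
    (p q : ℕ) (hpq : q + 2 ≤ p) (f g : (ℕ →₀ ℕ) → ℂ)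
    (hf : (∑' α : ℕ →₀ ℕ, ENNReal.ofReal (‖f α‖ ^ 2 / (twoNpow α) ^ q)) < ⊤)
    (hg : (∑' β : ℕ →₀ ℕ, ENNReal.ofReal (‖g β‖ ^ 2 / (twoNpow β) ^ p)) < ⊤) :
    (∑' α : ℕ →₀ ℕ, ENNReal.ofReal (1 / (twoNpow α) ^ (p - q))) < ⊤ ∧
    (∑' γ : ℕ →₀ ℕ, ENNReal.ofReal (‖wick f g γ‖ ^ 2 / (twoNpow γ) ^ p))
      ≤ (∑' α : ℕ →₀ ℕ, ENNReal.ofReal (1 / (twoNpow α) ^ (p - q)))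
          * (∑' α : ℕ →₀ ℕ, ENNReal.ofReal (‖f α‖ ^ 2 / (twoNpow α) ^ q))
          * (∑' β : ℕ →₀ ℕ, ENNReal.ofReal (‖g β‖ ^ 2 / (twoNpow β) ^ p)) := by
  have hqp : q ≤ p := by omega
  have hS3 := tsum_inv_twoNpow_le (p - q) (by omega)
  refine ⟨lt_of_le_of_lt hS3 (by norm_num), ?_⟩
  set S : ℝ≥0∞ := ∑' α : ℕ →₀ ℕ, ENNReal.ofReal (1 / (twoNpow α) ^ (p - q)) with hSdef
  set u : (ℕ →₀ ℕ) → ℝ≥0∞ := fun α => ENNReal.ofReal (‖f α‖ ^ 2 / (twoNpow α) ^ q) with hu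
  set w : (ℕ →₀ ℕ) → ℝ≥0∞ := fun β => ENNReal.ofReal (‖g β‖ ^ 2 / (twoNpow β) ^ p) with hw
  have step1 : ∀ γ : ℕ →₀ ℕ, ENNReal.ofReal (‖wick f g γ‖ ^ 2 / (twoNpow γ) ^ p)
      ≤ S * ∑ x ∈ Finset.HasAntidiagonal.antidiagonal γ, u x.1 * w x.2 := by
    intro γ
    have hP0 : (0:ℝ) ≤ ∑ x ∈ Finset.HasAntidiagonal.antidiagonal γ, 1 / twoNpow x.1 ^ (p-q) :=
      Finset.sum_nonneg fun x _ => by have := twoNpow_pos x.1; positivity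
    calc ENNReal.ofReal (‖wick f g γ‖ ^ 2 / (twoNpow γ) ^ p)
        ≤ ENNReal.ofReal ((∑ x ∈ Finset.HasAntidiagonal.antidiagonal γ, 1 / twoNpow x.1 ^ (p-q))
            * (∑ x ∈ Finset.HasAntidiagonal.antidiagonal γ,
                (‖f x.1‖^2 / twoNpow x.1 ^ q) * (‖g x.2‖^2 / twoNpow x.2 ^ p))) :=
          ENNReal.ofReal_le_ofReal (wick_sq_le p q hqp f g γ)
      _ = ENNReal.ofReal (∑ x ∈ Finset.HasAntidiagonal.antidiagonal γ, 1 / twoNpow x.1 ^ (p-q))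
            * ENNReal.ofReal (∑ x ∈ Finset.HasAntidiagonal.antidiagonal γ,
                (‖f x.1‖^2 / twoNpow x.1 ^ q) * (‖g x.2‖^2 / twoNpow x.2 ^ p)) :=
          ENNReal.ofReal_mul hP0
      _ ≤ S * ∑ x ∈ Finset.HasAntidiagonal.antidiagonal γ, u x.1 * w x.2 := by
          refine mul_le_mul' ?_ ?_
          · -- first factor ≤ S
            rw [ENNReal.ofReal_sum_of_nonneg
              (fun x _ => by have := twoNpow_pos x.1; positivity)]
            have hinj : ∀ x ∈ Finset.HasAntidiagonal.antidiagonal γ, ∀ y ∈ Finset.HasAntidiagonal.antidiagonal γ,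
                x.1 = y.1 → x = y := by
              intro x hx y hy hxy
              have h1 : x.1 + x.2 = γ := Finset.HasAntidiagonal.mem_antidiagonal.mp hx
              have h2 : y.1 + y.2 = γ := Finset.HasAntidiagonal.mem_antidiagonal.mp hy
              have : x.2 = y.2 := by
                have := h1.trans h2.symm
                rw [hxy] at this
                exact add_left_cancel this
              exact Prod.ext hxy this
            calc ∑ i ∈ Finset.HasAntidiagonal.antidiagonal γ, ENNReal.ofReal (1 / twoNpow i.1 ^ (p-q))
                = ∑ α ∈ (Finset.HasAntidiagonal.antidiagonal γ).image Prod.fst,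
                    ENNReal.ofReal (1 / twoNpow α ^ (p-q)) :=
                  (Finset.sum_image (f := fun α : ℕ →₀ ℕ =>
                    ENNReal.ofReal (1 / twoNpow α ^ (p-q))) (g := Prod.fst) hinj).symm
              _ ≤ S := ENNReal.sum_le_tsum _
          · -- second factor
            rw [ENNReal.ofReal_sum_of_nonneg (fun x _ => by
              have h1 := twoNpow_pos x.1; have h2 := twoNpow_pos x.2; positivity)]
            refine le_of_eq (Finset.sum_congr rfl fun x _ => ?_)
            rw [ENNReal.ofReal_mul (by have := twoNpow_pos x.1; positivity)]
  calc ∑' γ : ℕ →₀ ℕ, ENNReal.ofReal (‖wick f g γ‖ ^ 2 / (twoNpow γ) ^ p)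
      ≤ ∑' γ : ℕ →₀ ℕ, S * ∑ x ∈ Finset.HasAntidiagonal.antidiagonal γ, u x.1 * w x.2 :=
        ENNReal.tsum_le_tsum step1
    _ = S * ∑' γ : ℕ →₀ ℕ, ∑ x ∈ Finset.HasAntidiagonal.antidiagonal γ, u x.1 * w x.2 :=
        ENNReal.tsum_mul_left
    _ = S * ((∑' α : ℕ →₀ ℕ, u α) * (∑' β : ℕ →₀ ℕ, w β)) := by
        rw [tsum_antidiagonal_mul]
    _ = S * (∑' α : ℕ →₀ ℕ, u α) * (∑' β : ℕ →₀ ℕ, w β) := by rw [mul_assoc]
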